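/- arXiv:0801.3016 — 5 statements merged into one kernel-verified Lean document; each statement's English description precedes it below -/
import Mathlib

section
/- Let A be an abelian category in which every object has finite length, let B ⊆ A be a Serre subcategory, and let i : B → A denote the inclusion functor. Then i admits a left adjoint and a right adjoint. (The right adjoint sends c to its maximal subobject in B; the left adjoint sends c to the quotient of c by the minimal subobject with quotient in B.) -/
open CategoryTheory Limits

universe v u

/-- An object of an abelian category has finite length: it admits a finite
composition series. -/
inductive ObjFiniteLength {C : Type u} [Category.{v} C] [Abelian C] : C → Prop
  | of_isZero (X : C) : IsZero X → ObjFiniteLength X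
  | of_shortExact (S : ShortComplex C) : S.ShortExact → ObjFiniteLength S.X₁ →
      Simple S.X₃ → ObjFiniteLength S.X₂

namespace Statement1Aux

/-! ### An order-theoretic lemma -/

theorem wf_of_pair {α β γ : Type*} [PartialOrder α] [PartialOrder β] [PartialOrder γ]
    (f : α → β) (g : α → γ) (hf : Monotone f) (hg : Monotone g)
    (hkey : ∀ a a' : α, a ≤ a' → f a' ≤ f a → g a' ≤ g a → a' ≤ a)
    (wb : WellFounded ((· < ·) : β → β → Prop))
    (wc : WellFounded ((· < ·) : γ → γ → Prop)) :
    WellFounded ((· < ·) : α → α → Prop) := by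
  have sub : ∀ a a' : α, a < a' →
      Prod.Lex (· < ·) (· < ·) (f a, g a) (f a', g a') := by
    intro a a' h
    rcases lt_or_eq_of_le (hf h.le) with h1 | h1
    · exact Prod.Lex.left _ _ h1
    · have h2 : g a < g a' := by
        rcases lt_or_eq_of_le (hg h.le) with h2 | h2
        · exact h2
        · exact absurd (hkey a a' h.le h1.ge h2.ge) (not_le_of_gt h)
      rw [show (f a, g a) = (f a', g a) by rw [h1]]
      exact Prod.Lex.right _ h2
  exact Subrelation.wf (fun {a a'} h => sub a a' h)
    (InvImage.wf (fun a => (f a, g a)) (wb.prod_lex wc))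

theorem wf_of_pair_gt {α β γ : Type*} [PartialOrder α] [PartialOrder β] [PartialOrder γ]
    (f : α → β) (g : α → γ) (hf : Monotone f) (hg : Monotone g)
    (hkey : ∀ a a' : α, a ≤ a' → f a' ≤ f a → g a' ≤ g a → a' ≤ a)
    (wb : WellFounded ((· > ·) : β → β → Prop))
    (wc : WellFounded ((· > ·) : γ → γ → Prop)) :
    WellFounded ((· > ·) : α → α → Prop) := by
  have sub : ∀ a a' : α, a > a' →
      Prod.Lex ((· > ·) : β → β → Prop) ((· > ·) : γ → γ → Prop) (f a, g a) (f a', g a') := by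
    intro a a' h
    rcases lt_or_eq_of_le (hf h.le) with h1 | h1
    · exact Prod.Lex.left _ _ h1
    · have h2 : g a' < g a := by
        rcases lt_or_eq_of_le (hg h.le) with h2 | h2
        · exact h2
        · exact absurd (hkey a' a h.le h1.ge h2.ge) (not_le_of_gt h)
      rw [show (f a, g a) = (f a', g a) by rw [h1]]
      exact Prod.Lex.right _ h2
  exact Subrelation.wf (fun {a a'} h => sub a a' h)
    (InvImage.wf (fun a => (f a, g a)) (wb.prod_lex wc))

theorem wf_lt_of_isSimpleOrder {α : Type*} [PartialOrder α] [BoundedOrder α] [IsSimpleOrder α] :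
    WellFounded ((· < ·) : α → α → Prop) := by
  have acc_bot : Acc (· < ·) (⊥ : α) := ⟨_, fun b hb => absurd hb (not_lt_bot)⟩
  constructor
  intro a
  rcases IsSimpleOrder.eq_bot_or_eq_top a with rfl | rfl
  · exact acc_bot
  · refine ⟨_, fun b hb => ?_⟩
    rcases IsSimpleOrder.eq_bot_or_eq_top b with rfl | rfl
    · exact acc_bot
    · exact absurd hb (lt_irrefl _)

theorem wf_gt_of_isSimpleOrder {α : Type*} [PartialOrder α] [BoundedOrder α] [IsSimpleOrder α] :
    WellFounded ((· > ·) : α → α → Prop) := by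
  have acc_top : Acc (· > ·) (⊤ : α) := ⟨_, fun b hb => absurd hb (not_top_lt)⟩
  constructor
  intro a
  rcases IsSimpleOrder.eq_bot_or_eq_top a with rfl | rfl
  · refine ⟨_, fun b hb => ?_⟩
    rcases IsSimpleOrder.eq_bot_or_eq_top b with rfl | rfl
    · exact absurd hb (lt_irrefl _)
    · exact acc_top
  · exact acc_top

/-! ### Two invariants of a subobject of the middle term of a short exact sequence -/

variable {C : Type u} [Category.{v} C] [Abelian C]

/-- The "intersection with `X₁`" of a subobject of `X₂`, as a subobject of `X₁`. -/
noncomputable def pb {X₁ X₂ : C} (f : X₁ ⟶ X₂) (Y : Subobject X₂) : Subobject X₁ :=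
  Subobject.mk (pullback.snd Y.arrow f)

/-- The image in `X₃` of a subobject of `X₂`. -/
noncomputable def im {X₂ X₃ : C} (g : X₂ ⟶ X₃) (Y : Subobject X₂) : Subobject X₃ :=
  imageSubobject (Y.arrow ≫ g)

theorem pb_mono {X₁ X₂ : C} (f : X₁ ⟶ X₂) : Monotone (pb f) := by
  intro Y Y' h
  refine Subobject.mk_le_mk_of_comm
    (pullback.lift (pullback.fst _ _ ≫ Subobject.ofLE _ _ h) (pullback.snd _ _) ?_) ?_
  · rw [Category.assoc, Subobject.ofLE_arrow, pullback.condition]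
  · exact pullback.lift_snd _ _ _

theorem im_mono {X₂ X₃ : C} (g : X₂ ⟶ X₃) : Monotone (im g) := by
  intro Y Y' h
  refine Subobject.mk_le_mk_of_comm
    (image.lift
      { I := image (Y'.arrow ≫ g)
        m := image.ι (Y'.arrow ≫ g)
        e := Subobject.ofLE _ _ h ≫ factorThruImage (Y'.arrow ≫ g)
        fac := by rw [Category.assoc, image.fac, ← Category.assoc, Subobject.ofLE_arrow] })
    (image.lift_fac _)

theorem key_lemma {S : ShortComplex C} (hS : S.ShortExact) (Y Y' : Subobject S.X₂)
    (hle : Y ≤ Y') (h1 : pb S.f Y' ≤ pb S.f Y) (h2 : im S.g Y' ≤ im S.g Y) : Y' ≤ Y := by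
  haveI := hS.mono_f
  haveI := hS.epi_g
  set h : (Y : C) ⟶ (Y' : C) := Subobject.ofLE Y Y' hle with hh
  have hcomm : h ≫ Y'.arrow = Y.arrow := Subobject.ofLE_arrow hle
  have hepi : Epi h := by
    rw [epi_iff_surjective_up_to_refinements]
    intro A y'
    obtain ⟨A₁, π₁, hπ₁, y₀, hfac⟩ := surjective_up_to_refinements_of_epi
      (factorThruImageSubobject (Y.arrow ≫ S.g))
      (y' ≫ factorThruImageSubobject (Y'.arrow ≫ S.g) ≫ Subobject.ofLE _ _ h2)
    have e1 : π₁ ≫ y' ≫ Y'.arrow ≫ S.g = y₀ ≫ Y.arrow ≫ S.g := by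
      have := hfac =≫ (im S.g Y).arrow
      have hx : Subobject.ofLE (imageSubobject (Y'.arrow ≫ S.g)) (imageSubobject (Y.arrow ≫ S.g)) h2 ≫
          (imageSubobject (Y.arrow ≫ S.g)).arrow = (imageSubobject (Y'.arrow ≫ S.g)).arrow :=
        Subobject.ofLE_arrow h2
      simpa only [Category.assoc, hx, imageSubobject_arrow_comp, im] using this
    have e2 : (π₁ ≫ y' ≫ Y'.arrow - y₀ ≫ Y.arrow) ≫ S.g = 0 := by
      rw [Preadditive.sub_comp, Category.assoc, Category.assoc, Category.assoc, e1, sub_self]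
    obtain ⟨A₂, π₂, hπ₂, x₁, e3⟩ := hS.exact.exact_up_to_refinements _ e2
    have e4 : (π₂ ≫ π₁ ≫ y' - π₂ ≫ y₀ ≫ h) ≫ Y'.arrow = x₁ ≫ S.f := by
      rw [Preadditive.sub_comp, ← e3, Preadditive.comp_sub]
      simp only [Category.assoc, hcomm]
    set c : A₂ ⟶ pullback Y'.arrow S.f := pullback.lift _ x₁ e4 with hc
    have hcsnd : c ≫ pullback.snd Y'.arrow S.f = x₁ := pullback.lift_snd _ _ _
    have hcfst : c ≫ pullback.fst Y'.arrow S.f = π₂ ≫ π₁ ≫ y' - π₂ ≫ y₀ ≫ h :=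
      pullback.lift_fst _ _ _
    set d : (pullback Y'.arrow S.f : C) ⟶ (pullback Y.arrow S.f : C) :=
      Subobject.ofMkLEMk _ _ h1 with hd
    have e5 : d ≫ pullback.snd Y.arrow S.f = pullback.snd Y'.arrow S.f :=
      Subobject.ofMkLEMk_comp h1
    set v : A₂ ⟶ (Y : C) := c ≫ d ≫ pullback.fst Y.arrow S.f with hv
    have e6 : v ≫ Y.arrow = x₁ ≫ S.f := by
      rw [hv, Category.assoc, Category.assoc, pullback.condition, ← Category.assoc, ← Category.assoc,
        Category.assoc c d, e5, hcsnd]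
    refine ⟨A₂, π₂ ≫ π₁, epi_comp _ _, v + π₂ ≫ y₀, ?_⟩
    have goal' : π₂ ≫ π₁ ≫ y' ≫ Y'.arrow = v ≫ Y.arrow + π₂ ≫ y₀ ≫ Y.arrow := by
      rw [e6, ← e3, Preadditive.comp_sub]
      abel
    rw [← cancel_mono Y'.arrow]
    simp only [Category.assoc, Preadditive.add_comp, hcomm]
    exact goal'
  haveI : Mono h := inferInstance
  haveI : IsIso h := isIso_of_mono_of_epi h
  refine Subobject.le_of_comm (inv h) ?_
  rw [← hcomm, ← Category.assoc, IsIso.inv_hom_id, Category.id_comp]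

/-! ### Finite length implies well-foundedness of the subobject lattice -/

theorem wf_subobject {X : C} (hX : ObjFiniteLength X) :
    WellFounded ((· < ·) : Subobject X → Subobject X → Prop) ∧
      WellFounded ((· > ·) : Subobject X → Subobject X → Prop) := by
  induction hX with
  | of_isZero X hX =>
    have hsub : ∀ Y Y' : Subobject X, Y ≤ Y' := by
      intro Y Y'
      refine Subobject.le_of_comm 0 ?_
      rw [zero_comp]
      exact (hX.eq_zero_of_tgt Y.arrow).symm
    have hnolt : ∀ Y Y' : Subobject X, ¬ Y < Y' := fun Y Y' h =>
      absurd (hsub Y' Y) h.not_ge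
    constructor
    · exact ⟨fun a => ⟨a, fun b hb => absurd hb (hnolt _ _)⟩⟩
    · exact ⟨fun a => ⟨a, fun b hb => absurd hb (hnolt _ _)⟩⟩
  | of_shortExact S hS h1 h3 ih =>
    haveI := h3
    constructor
    · exact wf_of_pair (pb S.f) (im S.g) (pb_mono S.f) (im_mono S.g)
        (fun a a' h hf hg => key_lemma hS a a' h hf hg) ih.1 wf_lt_of_isSimpleOrder
    · exact wf_of_pair_gt (pb S.f) (im S.g) (pb_mono S.f) (im_mono S.g)
        (fun a a' h hf hg => key_lemma hS a a' h hf hg) ih.2 wf_gt_of_isSimpleOrder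

/-! ### Serre subcategory closure lemmas -/

section Serre

variable (P : C → Prop)
variable (hne : ∃ X, P X)
variable (hsub : ∀ ⦃X Y : C⦄ (f : X ⟶ Y), Mono f → P Y → P X)
variable (hquot : ∀ ⦃X Y : C⦄ (f : X ⟶ Y), Epi f → P X → P Y)
variable (hext : ∀ S : ShortComplex C, S.ShortExact → P S.X₁ → P S.X₃ → P S.X₂)

include hne hsub in
theorem P_of_isZero {Z : C} (hZ : IsZero Z) : P Z := by
  obtain ⟨W, hW⟩ := hne
  have : Mono (0 : Z ⟶ W) := ⟨fun u v _ => hZ.eq_of_tgt u v⟩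
  exact hsub (0 : Z ⟶ W) this hW

include hext in
theorem P_biprod {Z Z' : C} (hZ : P Z) (hZ' : P Z') : P (Z ⊞ Z') := by
  refine hext (ShortComplex.mk (biprod.inl : Z ⟶ Z ⊞ Z') (biprod.snd) (by simp)) ?_ hZ hZ'
  refine ShortComplex.Splitting.shortExact
    { r := biprod.fst
      s := biprod.inr
      f_r := biprod.inl_fst
      s_g := biprod.inr_snd
      id := biprod.total }

include hquot hext in
theorem P_sup {X : C} (Y Y' : Subobject X) (hY : P (Y : C)) (hY' : P (Y' : C)) :
    P ((Y ⊔ Y' : Subobject X) : C) := by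
  set u : (Y : C) ⊞ (Y' : C) ⟶ ((Y ⊔ Y' : Subobject X) : C) :=
    biprod.desc (Subobject.ofLE Y (Y ⊔ Y') le_sup_left)
      (Subobject.ofLE Y' (Y ⊔ Y') le_sup_right) with hu
  have hfac : factorThruImage u ≫ image.ι u = u := image.fac u
  set m : image u ⟶ ((Y ⊔ Y' : Subobject X) : C) := image.ι u with hm
  -- the subobject of `X` given by the image of `u`
  have hle1 : Y ≤ Subobject.mk (m ≫ (Y ⊔ Y' : Subobject X).arrow) := by
    refine Subobject.le_mk_of_comm (biprod.inl ≫ factorThruImage u) ?_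
    rw [Category.assoc, ← Category.assoc (factorThruImage u), hfac]
    rw [← Category.assoc, biprod.inl_desc, Subobject.ofLE_arrow]
  have hle2 : Y' ≤ Subobject.mk (m ≫ (Y ⊔ Y' : Subobject X).arrow) := by
    refine Subobject.le_mk_of_comm (biprod.inr ≫ factorThruImage u) ?_
    rw [Category.assoc, ← Category.assoc (factorThruImage u), hfac]
    rw [← Category.assoc, biprod.inr_desc, Subobject.ofLE_arrow]
  have hle : Y ⊔ Y' ≤ Subobject.mk (m ≫ (Y ⊔ Y' : Subobject X).arrow) := sup_le hle1 hle2
  set j : ((Y ⊔ Y' : Subobject X) : C) ⟶ image u :=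
    Subobject.ofLEMk _ (m ≫ (Y ⊔ Y' : Subobject X).arrow) hle with hj
  have hjm : j ≫ m ≫ (Y ⊔ Y' : Subobject X).arrow = (Y ⊔ Y' : Subobject X).arrow :=
    Subobject.ofLEMk_comp hle
  have hjm' : j ≫ m = 𝟙 _ := by
    rw [← cancel_mono (Y ⊔ Y' : Subobject X).arrow, Category.assoc, hjm, Category.id_comp]
  haveI : Epi m := by
    have : Epi (j ≫ m) := by rw [hjm']; infer_instance
    exact epi_of_epi j m
  haveI : Epi u := by
    rw [← hfac]
    exact epi_comp _ _
  exact hquot u inferInstance (P_biprod P hext hY hY')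

end Serre

/-! ### A monomorphism criterion for maps out of a cokernel -/

theorem mono_cokernelDesc {X W : C} (K : Subobject X) (e : X ⟶ W) (he : K.arrow ≫ e = 0)
    (hker : ∀ (A : C) (z : A ⟶ X), z ≫ e = 0 →
      ∃ (A' : C) (π : A' ⟶ A) (_ : Epi π) (y : A' ⟶ (K : C)), π ≫ z = y ≫ K.arrow) :
    Mono (cokernel.desc K.arrow e he) := by
  rw [Preadditive.mono_iff_cancel_zero]
  intro A x hx
  obtain ⟨A', π₀, hπ₀, z, hz⟩ := surjective_up_to_refinements_of_epi (cokernel.π K.arrow) x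
  have hze : z ≫ e = 0 := by
    rw [← cokernel.π_desc K.arrow e he, ← Category.assoc, ← hz, Category.assoc, hx, comp_zero]
  obtain ⟨A'', π₁, hπ₁, y, hy⟩ := hker _ z hze
  have hz0 : (π₁ ≫ π₀) ≫ x = 0 := by
    rw [Category.assoc, hz, ← Category.assoc, hy, Category.assoc, cokernel.condition, comp_zero]
  haveI : Epi (π₁ ≫ π₀) := epi_comp _ _
  rw [← cancel_epi (π₁ ≫ π₀), hz0, comp_zero]

/-- exactness of `Y.arrow, cokernel.π Y.arrow` packaged as a short complex. -/
theorem exact_arrow_cokernel {X : C} (Y : Subobject X) :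
    (ShortComplex.mk Y.arrow (cokernel.π Y.arrow) (cokernel.condition _)).Exact :=
  ShortComplex.exact_of_g_is_cokernel _ (cokernelIsCokernel _)

end Statement1Aux

open Statement1Aux

/-- if every object of an abelian category `C` has finite length and
`P` is a Serre subcategory (nonempty, closed under subobjects, quotients and
extensions), then the full inclusion of the subcategory of objects satisfying `P`
admits both a left adjoint and a right adjoint. -/
theorem statement1 {C : Type u} [Category.{v} C] [Abelian C]
    (hlen : ∀ X : C, ObjFiniteLength X)
    (P : C → Prop)
    (hne : ∃ X, P X)
    (hsub : ∀ ⦃X Y : C⦄ (f : X ⟶ Y), Mono f → P Y → P X)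
    (hquot : ∀ ⦃X Y : C⦄ (f : X ⟶ Y), Epi f → P X → P Y)
    (hext : ∀ S : ShortComplex C, S.ShortExact → P S.X₁ → P S.X₃ → P S.X₂) :
    (ObjectProperty.ι P).IsRightAdjoint ∧
      (ObjectProperty.ι P).IsLeftAdjoint := by
  have hzero : ∀ Z : C, IsZero Z → P Z := fun Z hZ => P_of_isZero P hne hsub hZ
  constructor
  · -- `incl` has a left adjoint: each structured arrow category has an initial object.
    haveI : ∀ X : C, HasInitial (StructuredArrow X (ObjectProperty.ι P)) := by
      intro X
      -- the set of subobjects whose quotient lies in `P`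
      set T : Set (Subobject X) := {Y | P (cokernel Y.arrow)} with hT
      have htop : (⊤ : Subobject X) ∈ T := by
        refine hzero _ (IsZero.of_epi_eq_zero (cokernel.π _) ?_)
        exact cokernel.π_of_epi _
      have hinf : ∀ Y Y', Y ∈ T → Y' ∈ T → Y ⊓ Y' ∈ T := by
        intro Y Y' hY hY'
        set e : X ⟶ cokernel Y.arrow ⊞ cokernel Y'.arrow :=
          biprod.lift (cokernel.π Y.arrow) (cokernel.π Y'.arrow) with he
        have he0 : (Y ⊓ Y').arrow ≫ e = 0 := by
          apply biprod.hom_ext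
          · rw [Category.assoc, biprod.lift_fst, zero_comp,
              ← Subobject.ofLE_arrow (inf_le_left (a := Y) (b := Y')), Category.assoc,
              cokernel.condition, comp_zero]
          · rw [Category.assoc, biprod.lift_snd, zero_comp,
              ← Subobject.ofLE_arrow (inf_le_right (a := Y) (b := Y')), Category.assoc,
              cokernel.condition, comp_zero]
        have hmono : Mono (cokernel.desc (Y ⊓ Y').arrow e he0) := by
          refine mono_cokernelDesc _ _ _ ?_
          intro A z hz
          have hz1 : z ≫ cokernel.π Y.arrow = 0 := by
            have := hz =≫ biprod.fst
            simpa [he] using this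
          have hz2 : z ≫ cokernel.π Y'.arrow = 0 := by
            have := hz =≫ biprod.snd
            simpa [he] using this
          obtain ⟨A₁, π₁, hπ₁, y, hy⟩ := (exact_arrow_cokernel Y).exact_up_to_refinements z hz1
          have hy2 : π₁ ≫ z = y ≫ Y.arrow := hy
          have hz2' : (π₁ ≫ z) ≫ cokernel.π Y'.arrow = 0 := by
            rw [Category.assoc, hz2, comp_zero]
          obtain ⟨A₂, π₂, hπ₂, y', hy'⟩ :=
            (exact_arrow_cokernel Y').exact_up_to_refinements (π₁ ≫ z) hz2'
          have hy'2 : π₂ ≫ π₁ ≫ z = y' ≫ Y'.arrow := hy'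
          have hfac : (Y ⊓ Y').Factors (π₂ ≫ π₁ ≫ z) := by
            rw [Subobject.inf_factors]
            constructor
            · rw [show π₂ ≫ π₁ ≫ z = (π₂ ≫ y) ≫ Y.arrow by
                rw [Category.assoc, ← hy2]]
              exact Subobject.factors_comp_arrow _
            · rw [hy'2]
              exact Subobject.factors_comp_arrow _
          refine ⟨A₂, π₂ ≫ π₁, epi_comp _ _, (Y ⊓ Y').factorThru _ hfac, ?_⟩
          rw [Subobject.factorThru_arrow, Category.assoc]
        exact hsub _ hmono (P_biprod P hext hY hY')
      -- a minimal element of `T` is a least element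
      obtain ⟨K, hKT, hKmin⟩ := (wf_subobject (hlen X)).1.has_min T ⟨⊤, htop⟩
      have hKleast : ∀ Y ∈ T, K ≤ Y := by
        intro Y hY
        have hKY : K ⊓ Y ∈ T := hinf _ _ hKT hY
        have : ¬ K ⊓ Y < K := hKmin _ hKY
        have heq : K ⊓ Y = K := by
          rcases lt_or_eq_of_le (inf_le_left (a := K) (b := Y)) with h | h
          · exact absurd h this
          · exact h
        rw [← heq]
        exact inf_le_right
      -- construct the initial object
      have hker_mem : ∀ (b : ObjectProperty.FullSubcategory P) (φ : X ⟶ b.obj), kernelSubobject φ ∈ T := by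
        intro b φ
        have hm : Mono (cokernel.desc (kernelSubobject φ).arrow φ (by simp)) := by
          refine mono_cokernelDesc _ _ _ ?_
          intro A z hz
          exact ⟨A, 𝟙 A, inferInstance, factorThruKernelSubobject φ z hz, by
            rw [Category.id_comp, factorThruKernelSubobject_comp_arrow]⟩
        exact hsub _ hm b.property
      refine IsInitial.hasInitial
        (X := StructuredArrow.mk (Y := (⟨cokernel K.arrow, hKT⟩ : ObjectProperty.FullSubcategory P))
          (cokernel.π K.arrow)) ?_
      refine IsInitial.ofUniqueHom (fun B => ?_) (fun B m => ?_)
      · -- existence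
        have hle : K ≤ kernelSubobject B.hom := hKleast _ (hker_mem B.right B.hom)
        have hzero' : K.arrow ≫ B.hom = 0 := by
          rw [← Subobject.ofLE_arrow hle, Category.assoc, kernelSubobject_arrow_comp, comp_zero]
        exact StructuredArrow.homMk (ObjectProperty.homMk (cokernel.desc K.arrow B.hom hzero')) (by simp)
      · -- uniqueness
        apply StructuredArrow.hom_ext
        simp only [StructuredArrow.homMk_right]
        apply ObjectProperty.hom_ext
        change _ = cokernel.desc K.arrow B.hom _
        rw [← cancel_epi (cokernel.π K.arrow), cokernel.π_desc]
        simpa using StructuredArrow.w m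
    exact isRightAdjointOfStructuredArrowInitials _
  · -- `incl` has a right adjoint: each costructured arrow category has a terminal object.
    haveI : ∀ X : C, HasTerminal (CostructuredArrow (ObjectProperty.ι P) X) := by
      intro X
      set T : Set (Subobject X) := {Y | P (Y : C)} with hT
      have hbot : (⊥ : Subobject X) ∈ T :=
        hzero _ (IsZero.of_mono_eq_zero _ (Subobject.bot_arrow (B := X)))
      have hsupT : ∀ Y Y', Y ∈ T → Y' ∈ T → Y ⊔ Y' ∈ T := fun Y Y' hY hY' =>
        P_sup P hquot hext Y Y' hY hY'
      obtain ⟨M, hMT, hMmax⟩ := (wf_subobject (hlen X)).2.has_min T ⟨⊥, hbot⟩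
      have hMgreatest : ∀ Y ∈ T, Y ≤ M := by
        intro Y hY
        have hMY : M ⊔ Y ∈ T := hsupT _ _ hMT hY
        have : ¬ M < M ⊔ Y := hMmax _ hMY
        have heq : M ⊔ Y = M := by
          rcases lt_or_eq_of_le (le_sup_left (a := M) (b := Y)) with h | h
          · exact absurd h this
          · exact h.symm
        rw [← heq]
        exact le_sup_right
      refine IsTerminal.hasTerminal
        (X := CostructuredArrow.mk (Y := (⟨(M : C), hMT⟩ : ObjectProperty.FullSubcategory P)) M.arrow) ?_
      refine IsTerminal.ofUniqueHom (fun B => ?_) (fun B m => ?_)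
      · -- existence
        have him : imageSubobject B.hom ∈ T :=
          hquot (factorThruImageSubobject B.hom) inferInstance B.left.property
        have hle : imageSubobject B.hom ≤ M := hMgreatest _ him
        have hψ : (factorThruImageSubobject B.hom ≫ Subobject.ofLE _ _ hle) ≫ M.arrow
            = B.hom := by
          rw [Category.assoc, Subobject.ofLE_arrow, imageSubobject_arrow_comp]
        refine CostructuredArrow.homMk
          (show B.left ⟶ (⟨(M : C), hMT⟩ : ObjectProperty.FullSubcategory P) from
            ObjectProperty.homMk (factorThruImageSubobject B.hom ≫ Subobject.ofLE _ _ hle :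
              B.left.obj ⟶ (M : C))) ?_
        exact hψ
      · -- uniqueness
        apply CostructuredArrow.hom_ext
        apply ObjectProperty.hom_ext
        change (m.left.hom : B.left.obj ⟶ (M : C)) =
          factorThruImageSubobject B.hom ≫ Subobject.ofLE _ _
            (hMgreatest _ (hquot (factorThruImageSubobject B.hom) inferInstance B.left.property))
        rw [← cancel_mono M.arrow, Category.assoc, Subobject.ofLE_arrow,
          imageSubobject_arrow_comp]
        exact CostructuredArrow.w m
    exact isLeftAdjoint_of_costructuredArrowTerminals _
end

section
/- Let A be an abelian category with all objects of finite length and let s be a simple object. Call an epimorphism x → s an 'indecomposable cover' of s if s is the cosocle (largest semisimple quotient) of x. Then: (a) every epimorphism y → s admits a subobject of y which is an indecomposable cover of s; and (b) if x → s is an indecomposable cover and f : y → x is any morphism over s (i.e., the composite y → x → s equals a given epimorphism y → s), then f is an epimorphism. -/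
open CategoryTheory Limits

attribute [local instance] CategoryTheory.Abelian.hasFiniteBiproducts

universe v u

/-- An object is semisimple if it is a finite direct sum of simple objects. -/
def IsSemisimpleObj {C : Type u} [Category.{v} C] [Abelian C] (t : C) : Prop :=
  ∃ (n : ℕ) (f : Fin n → C), (∀ i, Simple (f i)) ∧ Nonempty (t ≅ ⨁ f)

/-- An epimorphism `π : x ⟶ s` is an indecomposable cover if it exhibits `s` as
the cosocle (largest semisimple quotient) of `x`, i.e. every epimorphism from `x`
to a semisimple object factors through `π`. -/
def IsIndecCover {C : Type u} [Category.{v} C] [Abelian C] {x s : C}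
    (π : x ⟶ s) : Prop :=
  Epi π ∧ ∀ (t : C) (q : x ⟶ t), Epi q → IsSemisimpleObj t →
    ∃ u : s ⟶ t, π ≫ u = q

section Aux

variable {C : Type u} [Category.{v} C] [Abelian C]

/-- Any morphism into a simple object is epi or zero. -/
lemma epi_or_zero_to_simple {X t : C} (ht : Simple t) (f : X ⟶ t) : Epi f ∨ f = 0 := by
  by_cases h : f = 0
  · exact Or.inr h
  · exact Or.inl (epi_of_nonzero_to_simple h)

/-- A nonzero morphism between simple objects is an isomorphism. -/
lemma isIso_of_simple_hom {s t : C} (hs : Simple s) (ht : Simple t) {u : s ⟶ t}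
    (hu : u ≠ 0) : IsIso u := by
  haveI : Epi u := epi_of_nonzero_to_simple hu
  exact isIso_of_epi_of_nonzero hu

/-- A simple object is semisimple. -/
lemma isSemisimpleObj_of_simple (t : C) (ht : Simple t) : IsSemisimpleObj t := by
  refine ⟨1, fun _ => t, fun _ => ht, ⟨?_⟩⟩
  refine ⟨biproduct.lift (fun _ => 𝟙 t), biproduct.π _ 0, ?_, ?_⟩
  · simp
  · apply biproduct.hom_ext
    intro j
    have : j = 0 := Subsingleton.elim _ _
    subst this
    simp

/-- A nonzero object of finite length has a simple quotient. -/
lemma exists_simple_quotient {X : C} (h : ObjFiniteLength X) :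
    IsZero X ∨ ∃ (t : C) (q : X ⟶ t), Simple t ∧ Epi q := by
  induction h with
  | of_isZero X hX => exact Or.inl hX
  | of_shortExact S hS h1 h3 _ => exact Or.inr ⟨S.X₃, S.g, h3, hS.epi_g⟩

/-- Length is at most `n`. -/
inductive LenLE {C : Type u} [Category.{v} C] [Abelian C] : C → ℕ → Prop
  | of_isZero (X : C) (n : ℕ) : IsZero X → LenLE X n
  | of_shortExact (S : ShortComplex C) (n : ℕ) : S.ShortExact → LenLE S.X₁ n →
      Simple S.X₃ → LenLE S.X₂ (n + 1)

lemma LenLE.mono' {X : C} {n : ℕ} (h : LenLE X n) : ∀ m, n ≤ m → LenLE X m := by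
  induction h with
  | of_isZero X n hX => exact fun m _ => LenLE.of_isZero X m hX
  | of_shortExact S n hS h1 h3 ih =>
    intro m hm
    obtain ⟨m', rfl⟩ : ∃ m', m = m' + 1 := ⟨m - 1, by omega⟩
    exact LenLE.of_shortExact S m' hS (ih m' (by omega)) h3

lemma objFiniteLength_lenLE {X : C} (h : ObjFiniteLength X) : ∃ n, LenLE X n := by
  induction h with
  | of_isZero X hX => exact ⟨0, LenLE.of_isZero X 0 hX⟩
  | of_shortExact S hS h1 h3 ih =>
    obtain ⟨n, hn⟩ := ih
    exact ⟨n + 1, LenLE.of_shortExact S n hS hn h3⟩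

/-- A subobject of an object of length ≤ n has length ≤ n. -/
lemma lenLE_of_mono {X : C} {n : ℕ} (h : LenLE X n) :
    ∀ (K : C) (ι : K ⟶ X), Mono ι → LenLE K n := by
  induction h with
  | of_isZero X n hX =>
    intro K ι hι
    have hι0 : ι = 0 := hX.eq_of_tgt ι 0
    rw [hι0] at hι
    haveI := hι
    exact LenLE.of_isZero K n (IsZero.of_mono_zero K X)
  | of_shortExact S n hS h1 h3 ih =>
    intro K ι hι
    haveI := hι
    haveI := hS.mono_f
    haveI := hS.epi_g
    rcases epi_or_zero_to_simple h3 (ι ≫ S.g) with hepi | hzero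
    · -- kernel of the composite maps into X₁
      set g' : K ⟶ S.X₃ := ι ≫ S.g with hg'
      haveI : Epi g' := hepi
      obtain ⟨j, hj⟩ := hS.exact.lift' (kernel.ι g' ≫ ι)
        (by rw [Category.assoc, ← hg', kernel.condition])
      haveI : Mono (kernel.ι g' ≫ ι) := mono_comp _ _
      haveI hjm : Mono j := mono_of_mono_fac hj
      have hK1 : LenLE (kernel g') n := ih _ j hjm
      have hS' : (ShortComplex.mk (kernel.ι g') g' (kernel.condition g')).ShortExact := by
        refine ⟨ShortComplex.exact_of_f_is_kernel _ (kernelIsKernel g')⟩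
      exact LenLE.of_shortExact _ n hS' hK1 h3
    · obtain ⟨ι', hι'⟩ := hS.exact.lift' ι hzero
      haveI : Mono ι' := mono_of_mono_fac hι'
      exact (ih K ι' ‹Mono ι'›).mono' (n + 1) (Nat.le_succ n)

/-- A proper subobject of an object of length ≤ n has length < n. -/
lemma lenLE_lt_of_mono_not_epi {X : C} {n : ℕ} (h : LenLE X n) :
    ∀ (K : C) (ι : K ⟶ X), Mono ι → ¬ Epi ι → ∃ m, m < n ∧ LenLE K m := by
  induction h with
  | of_isZero X n hX =>
    intro K ι hι hne
    exact absurd ⟨fun g h' _ => hX.eq_of_src g h'⟩ hne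
  | of_shortExact S n hS h1 h3 ih =>
    intro K ι hι hne
    haveI := hι
    haveI := hS.mono_f
    haveI := hS.epi_g
    rcases epi_or_zero_to_simple h3 (ι ≫ S.g) with hepi | hzero
    · set g' : K ⟶ S.X₃ := ι ≫ S.g with hg'
      haveI : Epi g' := hepi
      obtain ⟨j, hj⟩ := hS.exact.lift' (kernel.ι g' ≫ ι)
        (by rw [Category.assoc, ← hg', kernel.condition])
      haveI : Mono (kernel.ι g' ≫ ι) := mono_comp _ _
      haveI hjm : Mono j := mono_of_mono_fac hj
      have hS' : (ShortComplex.mk (kernel.ι g') g' (kernel.condition g')).ShortExact := by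
        refine ⟨ShortComplex.exact_of_f_is_kernel _ (kernelIsKernel g')⟩
      have hjne : ¬ Epi j := by
        intro hje
        haveI := hje
        haveI : IsIso j := isIso_of_mono_of_epi j
        apply hne
        apply Abelian.epi_of_cokernel_π_eq_zero
        have hf : S.f ≫ cokernel.π ι = 0 := by
          have hSf : S.f = inv j ≫ kernel.ι g' ≫ ι := by
            rw [← hj, IsIso.inv_hom_id_assoc]
          rw [hSf, Category.assoc, Category.assoc, cokernel.condition,
            comp_zero, comp_zero]
        obtain ⟨w, hw⟩ := hS.exact.desc' (cokernel.π ι) hf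
        have hgw : g' ≫ w = 0 := by
          rw [hg', Category.assoc, hw, cokernel.condition]
        have hw0 : w = 0 := by
          rw [← cancel_epi g', hgw, comp_zero]
        rw [← hw, hw0, comp_zero]
      obtain ⟨m, hm, hKm⟩ := ih _ j hjm hjne
      exact ⟨m + 1, Nat.succ_lt_succ hm, LenLE.of_shortExact _ m hS' hKm h3⟩
    · obtain ⟨ι', hι'⟩ := hS.exact.lift' ι hzero
      haveI : Mono ι' := mono_of_mono_fac hι'
      exact ⟨n, Nat.lt_succ_self n, lenLE_of_mono h1 K ι' ‹Mono ι'›⟩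

end Aux

/-- in an abelian category with all objects of finite length, with
`s` a simple object: (a) every epimorphism `y → s` admits a subobject of `y`
which is an indecomposable cover of `s`; (b) any morphism over `s` from an object
equipped with an epimorphism onto `s` to an indecomposable cover of `s` is an
epimorphism. -/
theorem statement5 {C : Type u} [Category.{v} C] [Abelian C]
    (hlen : ∀ X : C, ObjFiniteLength X)
    (s : C) (hs : Simple s) :
    (∀ (y : C) (p : y ⟶ s), Epi p →
      ∃ (x : C) (ι : x ⟶ y), Mono ι ∧ IsIndecCover (ι ≫ p)) ∧
    (∀ (x : C) (π : x ⟶ s), IsIndecCover π →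
      ∀ (y : C) (p : y ⟶ s) (f : y ⟶ x), Epi p → f ≫ π = p → Epi f) := by
  haveI := hs
  constructor
  · -- part (a)
    intro y p hp
    classical
    have hex : ∃ n : ℕ, ∃ (x : C) (ι : x ⟶ y), Mono ι ∧ Epi (ι ≫ p) ∧ LenLE x n := by
      obtain ⟨n, hn⟩ := objFiniteLength_lenLE (hlen y)
      exact ⟨n, y, 𝟙 y, inferInstance, by rwa [Category.id_comp], hn⟩
    obtain ⟨x, ι, hι, hπ, hxn⟩ := Nat.find_spec hex
    refine ⟨x, ι, hι, hπ, ?_⟩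
    intro t q hq hts
    haveI := hq
    haveI := hπ
    obtain ⟨k, f, hf, ⟨e⟩⟩ := hts
    set π : x ⟶ s := ι ≫ p with hπdef
    -- the kernel of π is killed by q
    have hker : kernel.ι π ≫ q = 0 := by
      have hcomp : ∀ i, kernel.ι π ≫ q ≫ e.hom ≫ biproduct.π f i = 0 := by
        intro i
        by_contra hne0
        haveI := hf i
        set q' : x ⟶ f i := q ≫ e.hom ≫ biproduct.π f i with hq'def
        haveI hq' : Epi q' := by
          rw [hq'def]
          infer_instance
        -- π restricted to the kernel of q' is epi
        have hκπ : Epi (kernel.ι q' ≫ π) := by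
          rcases epi_or_zero_to_simple hs (kernel.ι q' ≫ π) with h | h
          · exact h
          · exfalso
            have hu : q' ≫ Abelian.epiDesc q' π h = π := Abelian.comp_epiDesc q' π h
            have hune : Abelian.epiDesc q' π h ≠ 0 := by
              intro h0
              rw [h0, comp_zero] at hu
              haveI : Epi (0 : x ⟶ s) := hu ▸ hπ
              exact CategoryTheory.id_nonzero s ((cancel_epi (0 : x ⟶ s)).mp (by simp))
            haveI : IsIso (Abelian.epiDesc q' π h) :=
              isIso_of_simple_hom (hf i) hs hune
            apply hne0
            rw [← cancel_mono (Abelian.epiDesc q' π h), Category.assoc, hu,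
              kernel.condition, zero_comp]
        -- the kernel of q' is a proper subobject
        have hκne : ¬ Epi (kernel.ι q') := by
          intro hκ
          haveI := hκ
          have : q' = 0 := zero_of_epi_comp (kernel.ι q') (kernel.condition q')
          haveI : Epi (0 : x ⟶ f i) := this ▸ hq'
          exact CategoryTheory.id_nonzero (f i) ((cancel_epi (0 : x ⟶ f i)).mp (by simp))
        obtain ⟨m, hm, hKm⟩ :=
          lenLE_lt_of_mono_not_epi hxn (kernel q') (kernel.ι q') inferInstance hκne
        refine Nat.find_min hex hm ⟨kernel q', kernel.ι q' ≫ ι, mono_comp _ _, ?_, hKm⟩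
        rw [Category.assoc, ← hπdef]
        exact hκπ
      have h2 : kernel.ι π ≫ q ≫ e.hom = 0 := by
        apply biproduct.hom_ext
        intro i
        simpa using hcomp i
      rw [← cancel_mono e.hom, zero_comp, Category.assoc]
      exact h2
    exact ⟨Abelian.epiDesc π q hker, Abelian.comp_epiDesc π q hker⟩
  · -- part (b)
    intro x π hπ y p f hp hfp
    haveI := hp
    haveI := hπ.1
    by_contra hne
    have hcne : ¬ IsZero (cokernel f) := by
      intro h
      exact hne (Abelian.epi_of_cokernel_π_eq_zero _ (h.eq_of_tgt _ 0))
    rcases exists_simple_quotient (hlen (cokernel f)) with h | ⟨t, qt, hts, hqt⟩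
    · exact hcne h
    haveI := hts
    haveI := hqt
    have hepi : Epi (cokernel.π f ≫ qt) := epi_comp _ _
    obtain ⟨u, hu⟩ := hπ.2 t (cokernel.π f ≫ qt) hepi (isSemisimpleObj_of_simple t hts)
    have hu0 : u ≠ 0 := by
      intro h0
      rw [h0, comp_zero] at hu
      haveI : Epi (0 : x ⟶ t) := hu ▸ hepi
      exact CategoryTheory.id_nonzero t ((cancel_epi (0 : x ⟶ t)).mp (by simp))
    haveI : IsIso u := isIso_of_simple_hom hs hts hu0
    have hpu : p ≫ u = 0 := by
      rw [← hfp, Category.assoc, hu, ← Category.assoc, cokernel.condition, zero_comp]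
    exact hu0 (zero_of_epi_comp p hpu)
end

section
/- Let A' →(i_*) A →(j*) A'' be a recollement triple of abelian categories. Define j_{!*} : A'' → A by sending a'' to the image of the canonical map j_!(a'') → j_*(a''). Then j_{!*} sends simple objects of A'' to simple objects of A. -/
open CategoryTheory Limits ZeroObject

universe w v u₁ u₂ u₃

variable (A₁ : Type u₁) (A₂ : Type u₂) (A₃ : Type u₃)
  [Category.{v} A₁] [Category.{v} A₂] [Category.{v} A₃]
  [Abelian A₁] [Abelian A₂] [Abelian A₃]

/-- A recollement triple of abelian categories `A₁ ⥤ A₂ ⥤ A₃`: the exact functors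
`i = i_*` and `j = j^*` admit adjoints on both sides (`iL ⊣ i ⊣ iR`,
`jL ⊣ j ⊣ jR`, i.e. `i^* ⊣ i_* ⊣ i^!` and `j_! ⊣ j^* ⊣ j_*`), `i` is a full
embedding whose essential image is the kernel of `j`, and `j` exhibits `A₃` as
the Serre quotient of `A₂` by that kernel (equivalently, `j_!` and `j_*` are
fully faithful and `j` is a localization at the class of morphisms it inverts). -/
structure Recollement where
  i : A₁ ⥤ A₂
  j : A₂ ⥤ A₃
  iPFL : PreservesFiniteLimits i
  iPFC : PreservesFiniteColimits i
  jPFL : PreservesFiniteLimits j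
  jPFC : PreservesFiniteColimits j
  iL : A₂ ⥤ A₁
  iR : A₂ ⥤ A₁
  adjiL : iL ⊣ i
  adjiR : i ⊣ iR
  jL : A₃ ⥤ A₂
  jR : A₃ ⥤ A₂
  adjjL : jL ⊣ j
  adjjR : j ⊣ jR
  iFull : i.Full
  iFaithful : i.Faithful
  jLFull : jL.Full
  jLFaithful : jL.Faithful
  jRFull : jR.Full
  jRFaithful : jR.Faithful
  ker : ∀ X : A₂, IsZero (j.obj X) ↔ ∃ Y : A₁, Nonempty (i.obj Y ≅ X)
  isLoc : j.IsLocalization ((MorphismProperty.isomorphisms A₃).inverseImage j)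

namespace Recollement

variable {A₁ A₂ A₃} (R : Recollement A₁ A₂ A₃)

/-- The canonical map `j_! c ⟶ j_* c`, adjoint to the identity of `j^*`. -/
noncomputable def theta (c : A₃) : R.jL.obj c ⟶ R.jR.obj c :=
  haveI := R.jRFull
  haveI := R.jRFaithful
  (R.adjjL.homEquiv c (R.jR.obj c)).symm (inv (R.adjjR.counit.app c))

end Recollement

open CategoryTheory Limits

/-- for a recollement triple `A₁ ⥤ A₂ ⥤ A₃`, the intermediate
extension functor `j_{!*} : c ↦ image (j_! c ⟶ j_* c)` sends simple objects of
`A₃` to simple objects of `A₂`. -/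
theorem statement12 (R : Recollement A₁ A₂ A₃) (c : A₃) (hc : Simple c) :
    Simple (image (R.theta c)) := by
  haveI := R.jLFull; haveI := R.jLFaithful
  haveI := R.jRFull; haveI := R.jRFaithful
  haveI := R.adjjR.isLeftAdjoint
  haveI : (R.j).PreservesMonomorphisms :=
    Functor.preservesMonomorphisms_of_adjunction R.adjjL
  haveI : (R.j).PreservesEpimorphisms :=
    inferInstance
  set θ := R.theta c with hθdef
  set e := factorThruImage θ with hedef
  set m := image.ι θ with hmdef
  -- `j.map θ` is an isomorphism
  have hθ : R.adjjL.unit.app c ≫ R.j.map θ = inv (R.adjjR.counit.app c) := by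
    have h := (R.adjjL.homEquiv c (R.jR.obj c)).apply_symm_apply
      (inv (R.adjjR.counit.app c))
    rw [Adjunction.homEquiv_unit] at h
    exact h
  haveI : IsIso (R.j.map θ) := by
    have h : R.j.map θ = inv (R.adjjL.unit.app c) ≫ inv (R.adjjR.counit.app c) := by
      rw [← hθ, ← Category.assoc, IsIso.inv_hom_id, Category.id_comp]
    rw [h]; infer_instance
  have hem : R.j.map e ≫ R.j.map m = R.j.map θ := by
    rw [← Functor.map_comp, image.fac]
  haveI : Epi (R.j.map e ≫ R.j.map m) := by rw [hem]; infer_instance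
  haveI : Epi (R.j.map m) := epi_of_epi (R.j.map e) (R.j.map m)
  haveI : IsIso (R.j.map m) := isIso_of_mono_of_epi _
  -- `j (image θ) ≅ c`
  have eG : R.j.obj (image θ) ≅ c :=
    asIso (R.j.map m) ≪≫ asIso (R.adjjR.counit.app c)
  haveI : Simple (R.j.obj (image θ)) := Simple.of_iso eG
  -- subobjects of `image θ` killed by `j` are zero
  have sub : ∀ (Y : A₂) (k : Y ⟶ image θ), Mono k → IsZero (R.j.obj Y) → IsZero Y := by
    intro Y k hk hz
    haveI := hk
    have h0 : k ≫ m = 0 := by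
      rw [← (R.adjjR.homEquiv Y c).apply_symm_apply (k ≫ m),
        ← (R.adjjR.homEquiv Y c).apply_symm_apply 0]
      congr 1
      exact hz.eq_of_src _ _
    haveI : Mono (k ≫ m) := mono_comp k m
    exact IsZero.of_mono_eq_zero _ h0
  -- quotients of `image θ` killed by `j` are zero
  have quot : ∀ (Q : A₂) (q : image θ ⟶ Q), Epi q → IsZero (R.j.obj Q) → IsZero Q := by
    intro Q q hq hz
    haveI := hq
    have h0 : e ≫ q = 0 := by
      rw [← (R.adjjL.homEquiv c Q).symm_apply_apply (e ≫ q),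
        ← (R.adjjL.homEquiv c Q).symm_apply_apply 0]
      congr 1
      exact hz.eq_of_tgt _ _
    haveI : Epi (e ≫ q) := epi_comp e q
    exact IsZero.of_epi_eq_zero _ h0
  constructor
  intro Y f hf
  haveI := hf
  constructor
  · intro hiso hf0
    haveI := hiso
    have hz : IsZero (image θ) := IsZero.of_epi_eq_zero f hf0
    exact Simple.not_isZero (R.j.obj (image θ)) (R.j.map_isZero hz)
  · intro hfne
    haveI : Mono (R.j.map f) := inferInstance
    by_cases hzero : R.j.map f = 0
    · exfalso
      have hY : IsZero (R.j.obj Y) := IsZero.of_mono_eq_zero _ hzero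
      have : IsZero Y := sub Y f inferInstance hY
      exact hfne (this.eq_of_src f 0)
    · haveI : IsIso (R.j.map f) := isIso_of_mono_of_nonzero hzero
      -- the cokernel of `f` is killed by `j`
      have hcoker : IsZero (R.j.obj (cokernel f)) := by
        have hπ : R.j.map f ≫ R.j.map (cokernel.π f) = 0 := by
          rw [← Functor.map_comp, cokernel.condition, Functor.map_zero]
        have hπ0 : R.j.map (cokernel.π f) = 0 := by
          haveI : Epi (R.j.map f) := inferInstance
          rwa [← cancel_epi (R.j.map f), comp_zero]
        haveI : Epi (R.j.map (cokernel.π f)) := inferInstance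
        exact IsZero.of_epi_eq_zero _ hπ0
      have hC : IsZero (cokernel f) := quot (cokernel f) (cokernel.π f) inferInstance hcoker
      have hπ0 : cokernel.π f = 0 := hC.eq_of_tgt _ _
      haveI : Epi f := Abelian.epi_of_cokernel_π_eq_zero f hπ0
      exact isIso_of_mono_of_epi f
end

section
/- Let A' →(i_*) A →(j*) A'' be a recollement triple of abelian categories. Then every simple object of A is either isomorphic to i_*(s) for a simple object s of A', or isomorphic to j_{!*}(s) for a simple object s of A'', where j_{!*}(s) is the image of the canonical map j_!(s) → j_*(s). -/
open CategoryTheory Limits ZeroObject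

universe w v u₁ u₂ u₃

variable (A₁ : Type u₁) (A₂ : Type u₂) (A₃ : Type u₃)
  [Category.{v} A₁] [Category.{v} A₂] [Category.{v} A₃]
  [Abelian A₁] [Abelian A₂] [Abelian A₃]

open CategoryTheory Limits

/-- for a recollement triple `A₁ ⥤ A₂ ⥤ A₃`, every simple object
of `A₂` is isomorphic either to `i_*(s)` for a simple `s` of `A₁`, or to
`j_{!*}(s) = image (j_! s ⟶ j_* s)` for a simple `s` of `A₃`. -/
theorem statement13 (R : Recollement A₁ A₂ A₃) (X : A₂) (hX : Simple X) :
    (∃ s : A₁, Simple s ∧ Nonempty (R.i.obj s ≅ X)) ∨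
    (∃ s : A₃, Simple s ∧ Nonempty (image (R.theta s) ≅ X)) := by
  haveI := hX
  haveI := R.iPFL; haveI := R.iPFC; haveI := R.jPFL; haveI := R.jPFC
  haveI := R.iFull; haveI := R.iFaithful
  haveI := R.jRFull; haveI := R.jRFaithful
  haveI : R.i.IsLeftAdjoint := R.adjiR.isLeftAdjoint
  haveI : R.j.IsLeftAdjoint := R.adjjR.isLeftAdjoint
  by_cases hz : IsZero (R.j.obj X)
  · left
    obtain ⟨Y, ⟨e⟩⟩ := (R.ker X).mp hz
    refine ⟨Y, ?_, ⟨e⟩⟩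
    constructor
    intro Z f hm
    constructor
    · intro hiso h0
      have hY : IsZero Y := by
        have h1 : inv f ≫ f = inv f ≫ 0 := congrArg (fun g => inv f ≫ g) h0
        rw [IsZero.iff_id_eq_zero, ← IsIso.inv_hom_id f, h1, comp_zero]
      have hiY : IsZero (R.i.obj Y) := by
        rw [IsZero.iff_id_eq_zero, ← R.i.map_id, hY.eq_of_src (𝟙 Y) 0, R.i.map_zero]
      exact (Simple.not_isZero X) (hiY.of_iso e.symm)
    · intro hne
      have h1 : R.i.map f ≠ 0 := fun h => hne (R.i.zero_of_map_zero f h)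
      have h2 : R.i.map f ≫ e.hom ≠ 0 := by
        intro h
        apply h1
        rw [← Category.comp_id (R.i.map f), ← Iso.hom_inv_id e, ← Category.assoc, h,
          zero_comp]
      haveI : Mono (R.i.map f ≫ e.hom) := mono_comp _ _
      haveI := isIso_of_mono_of_nonzero h2
      haveI : IsIso (R.i.map f) := IsIso.of_isIso_comp_right (R.i.map f) e.hom
      exact isIso_of_fully_faithful R.i f
  · right
    -- θ (j X) = counit ≫ unit
    have hjηinv : R.j.map (R.adjjR.unit.app X) = inv (R.adjjR.counit.app (R.j.obj X)) :=
      IsIso.eq_inv_of_inv_hom_id (R.adjjR.left_triangle_components X)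
    have key : R.adjjL.homEquiv (R.j.obj X) (R.jR.obj (R.j.obj X))
        (R.adjjL.counit.app X ≫ R.adjjR.unit.app X)
        = inv (R.adjjR.counit.app (R.j.obj X)) := by
      rw [Adjunction.homEquiv_unit, Functor.map_comp, ← Category.assoc,
        R.adjjL.right_triangle_components X, Category.id_comp]
      exact hjηinv
    have hθ : R.theta (R.j.obj X) = R.adjjL.counit.app X ≫ R.adjjR.unit.app X := by
      unfold Recollement.theta
      rw [← key, Equiv.symm_apply_apply]
    haveI hX' : Simple ((𝟭 A₂).obj X) := hX
    -- the unit is nonzero, hence mono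
    have hη0 : R.adjjR.unit.app X ≠ 0 := by
      intro h
      apply hz
      have ht := R.adjjR.left_triangle_components X
      rw [h, R.j.map_zero, zero_comp] at ht
      rw [IsZero.iff_id_eq_zero, ← ht]
    haveI : Mono (R.adjjR.unit.app X) := mono_of_nonzero_from_simple hη0
    -- the counit is nonzero, hence epi
    have hε0 : R.adjjL.counit.app X ≠ 0 := by
      intro h
      apply hz
      have ht := R.adjjL.right_triangle_components X
      rw [h, R.j.map_zero, comp_zero] at ht
      rw [IsZero.iff_id_eq_zero, ← ht]
    haveI : Epi (R.adjjL.counit.app X) := epi_of_nonzero_to_simple hε0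
    haveI : R.jR.PreservesMonomorphisms :=
      Functor.preservesMonomorphisms_of_adjunction R.adjjR
    haveI hjη : IsIso (R.j.map (R.adjjR.unit.app X)) := by
      rw [hjηinv]; infer_instance
    -- j X is simple
    have hsimple : Simple (R.j.obj X) := by
      constructor
      intro T t hmt
      constructor
      · intro hiso h0
        apply hz
        have h1 : inv t ≫ t = inv t ≫ 0 := congrArg (fun g => inv t ≫ g) h0
        rw [IsZero.iff_id_eq_zero, ← IsIso.inv_hom_id t, h1, comp_zero]
      · intro hne
        haveI : Mono (R.jR.map t) := inferInstance
        have hpb : IsPullback (pullback.fst (R.adjjR.unit.app X) (R.jR.map t))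
            (pullback.snd (R.adjjR.unit.app X) (R.jR.map t))
            (R.adjjR.unit.app X) (R.jR.map t) :=
          IsPullback.of_hasPullback (R.adjjR.unit.app X) (R.jR.map t)
        have hpbj : IsPullback
            (R.j.map (pullback.fst (R.adjjR.unit.app X) (R.jR.map t)))
            (R.j.map (pullback.snd (R.adjjR.unit.app X) (R.jR.map t)))
            (R.j.map (R.adjjR.unit.app X)) (R.j.map (R.jR.map t)) := hpb.map R.j
        have hcomm : (R.j.map (R.jR.map t) ≫ inv (R.j.map (R.adjjR.unit.app X)))
            ≫ R.j.map (R.adjjR.unit.app X) = 𝟙 _ ≫ R.j.map (R.jR.map t) := by simp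
        have hw : R.j.map (pullback.fst (R.adjjR.unit.app X) (R.jR.map t))
            ≫ R.j.map (R.adjjR.unit.app X)
            = R.j.map (pullback.snd (R.adjjR.unit.app X) (R.jR.map t))
              ≫ R.j.map (R.jR.map t) := by
          rw [← Functor.map_comp, ← Functor.map_comp, hpb.w]
        have hjq : IsIso (R.j.map (pullback.snd (R.adjjR.unit.app X) (R.jR.map t))) := by
          refine ⟨hpbj.lift (R.j.map (R.jR.map t) ≫ inv (R.j.map (R.adjjR.unit.app X)))
            (𝟙 _) hcomm, ?_, hpbj.lift_snd _ _ hcomm⟩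
          apply hpbj.hom_ext
          · rw [Category.assoc, hpbj.lift_fst, Category.id_comp, ← Category.assoc,
              ← hw, Category.assoc, IsIso.hom_inv_id, Category.comp_id]
          · rw [Category.assoc, hpbj.lift_snd, Category.id_comp, Category.comp_id]
        have hrel : R.j.map (pullback.snd (R.adjjR.unit.app X) (R.jR.map t))
            ≫ R.adjjR.counit.app T ≫ t
            = R.j.map (pullback.fst (R.adjjR.unit.app X) (R.jR.map t)) := by
          have hnat : R.j.map (R.jR.map t) ≫ R.adjjR.counit.app (R.j.obj X)
              = R.adjjR.counit.app T ≫ t := by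
            exact (R.adjjR.counit.naturality t)
          rw [← hnat, ← Category.assoc, ← hw, Category.assoc,
            R.adjjR.left_triangle_components X]
          simp
        by_cases hp : pullback.fst (R.adjjR.unit.app X) (R.jR.map t) = 0
        · exfalso
          have hP : IsZero (pullback (R.adjjR.unit.app X) (R.jR.map t)) := by
            rw [IsZero.iff_id_eq_zero]
            apply (cancel_mono (pullback.fst (R.adjjR.unit.app X) (R.jR.map t))).mp
            rw [Category.id_comp, hp, zero_comp]
          have hjP : IsZero (R.j.obj (pullback (R.adjjR.unit.app X) (R.jR.map t))) := by
            rw [IsZero.iff_id_eq_zero, ← R.j.map_id, hP.eq_of_src (𝟙 _) 0, R.j.map_zero]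
          haveI := hjq
          have h1 : IsZero (R.j.obj (R.jR.obj T)) :=
            hjP.of_iso (asIso (R.j.map (pullback.snd (R.adjjR.unit.app X)
              (R.jR.map t)))).symm
          have hT : IsZero T := h1.of_iso (asIso (R.adjjR.counit.app T)).symm
          exact hne (hT.eq_of_src t 0)
        · haveI : IsIso (pullback.fst (R.adjjR.unit.app X) (R.jR.map t)) :=
            isIso_of_mono_of_nonzero hp
          haveI : IsIso (R.j.map (pullback.fst (R.adjjR.unit.app X) (R.jR.map t))) :=
            inferInstance
          haveI := hjq
          haveI : IsIso (R.j.map (pullback.snd (R.adjjR.unit.app X) (R.jR.map t))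
              ≫ R.adjjR.counit.app T ≫ t) := by
            rw [hrel]; infer_instance
          haveI : IsIso (R.adjjR.counit.app T ≫ t) :=
            IsIso.of_isIso_comp_left
              (R.j.map (pullback.snd (R.adjjR.unit.app X) (R.jR.map t))) _
          exact IsIso.of_isIso_comp_left (R.adjjR.counit.app T) t
    refine ⟨R.j.obj X, hsimple, ⟨?_⟩⟩
    haveI : StrongEpi (R.adjjL.counit.app X) := strongEpi_of_epi _
    rw [hθ]
    exact (image.isoStrongEpiMono (R.adjjL.counit.app X) (R.adjjR.unit.app X) rfl).symm
end

section
/- Let R : A → B be an exact, faithful functor between abelian categories and let s be an object of A such that for all objects E of A the map Hom_A(E, s) → Hom_B(R E, R s) is bijective. Then for every object c of A the map Ext¹_A(c, s) → Ext¹_B(Rc, Rs) on Yoneda Ext¹-groups is injective. -/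
open CategoryTheory Limits

universe v₁ v₂ u₁ u₂

/-- let `R : A ⥤ B` be an exact faithful functor between abelian
categories, and `s` an object of `A` such that `Hom_A(E, s) → Hom_B(R E, R s)` is
bijective for all `E`.  Then for every `c` the induced map
`Ext¹_A(c, s) → Ext¹_B(R c, R s)` is injective: if the images of two extensions
of `c` by `s` are equivalent, then the extensions are already equivalent. -/
theorem statement16 {A : Type u₁} [Category.{v₁} A] [Abelian A]
    {B : Type u₂} [Category.{v₂} B] [Abelian B]
    (R : A ⥤ B) [PreservesFiniteLimits R] [PreservesFiniteColimits R] [R.Faithful]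
    (s : A) (hhom : ∀ E : A, Function.Bijective (fun f : E ⟶ s => R.map f))
    (c : A) :
    ∀ (E E' : A) (i : s ⟶ E) (p : E ⟶ c) (i' : s ⟶ E') (p' : E' ⟶ c)
      (w : i ≫ p = 0) (w' : i' ≫ p' = 0),
      (ShortComplex.mk i p w).ShortExact → (ShortComplex.mk i' p' w').ShortExact →
      (∃ ψ : R.obj E ⟶ R.obj E', R.map i ≫ ψ = R.map i' ∧ ψ ≫ R.map p' = R.map p) →
      ∃ φ : E ⟶ E', i ≫ φ = i' ∧ φ ≫ p' = p := by
  intro E E' i p i' p' w w' hses hses' ⟨ψ, hψ₁, hψ₂⟩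
  have hepi' : Epi p' := hses'.epi_g
  -- pullback
  set X := pullback p p' with hX
  set q : X ⟶ E := pullback.fst p p' with hq
  set q' : X ⟶ E' := pullback.snd p p' with hq'
  have hcomm : q ≫ p = q' ≫ p' := pullback.condition
  have hk0 : (0 : s ⟶ E) ≫ p = i' ≫ p' := by rw [w', zero_comp]
  set k : s ⟶ X := pullback.lift 0 i' hk0 with hk
  have hkq : k ≫ q = 0 := pullback.lift_fst _ _ _
  have hkq' : k ≫ q' = i' := pullback.lift_snd _ _ _
  have hm0 : i ≫ p = i' ≫ p' := by rw [w, w']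
  set m : s ⟶ X := pullback.lift i i' hm0 with hm
  have hmq : m ≫ q = i := pullback.lift_fst _ _ _
  have hmq' : m ≫ q' = i' := pullback.lift_snd _ _ _
  -- image ses of the second sequence
  have hRses' := hses'.map_of_exact R
  have hmono : Mono (R.map i') := hRses'.mono_f
  -- kernel property of R.map i'
  have hkerlim : IsLimit (KernelFork.ofι (R.map i')
      (show R.map i' ≫ R.map p' = 0 by rw [← R.map_comp, w', R.map_zero])) := by
    exact hRses'.fIsKernel
  -- the map d : R X ⟶ R E'
  set d : R.obj X ⟶ R.obj E' := R.map q ≫ ψ - R.map q' with hd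
  have hd0 : d ≫ R.map p' = 0 := by
    rw [hd, Preadditive.sub_comp, Category.assoc, hψ₂, ← R.map_comp, ← R.map_comp, hcomm,
      sub_self]
  obtain ⟨ρ, hρ₀⟩ := KernelFork.IsLimit.lift' hkerlim d hd0
  have hρ : ρ ≫ R.map i' = d := hρ₀
  -- k ≫ ρ-lift
  have hkρ : R.map k ≫ ρ = -𝟙 (R.obj s) := by
    have : (R.map k ≫ ρ) ≫ R.map i' = (-𝟙 (R.obj s)) ≫ R.map i' := by
      rw [Category.assoc, hρ, hd, Preadditive.comp_sub, ← Category.assoc, ← R.map_comp, hkq,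
        R.map_zero, zero_comp, zero_sub, ← R.map_comp, hkq', Preadditive.neg_comp,
        Category.id_comp]
    exact (cancel_mono (R.map i')).1 this
  have hmρ : R.map m ≫ ρ = 0 := by
    have : (R.map m ≫ ρ) ≫ R.map i' = (0 : R.obj s ⟶ R.obj s) ≫ R.map i' := by
      rw [Category.assoc, hρ, hd, Preadditive.comp_sub, ← Category.assoc, ← R.map_comp, hmq,
        hψ₁, ← R.map_comp, hmq', sub_self, zero_comp]
    exact (cancel_mono (R.map i')).1 this
  -- lift -ρ to r : X ⟶ s
  obtain ⟨r, hr⟩ := (hhom X).2 (-ρ)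
  simp only at hr
  have hkr : k ≫ r = 𝟙 s := by
    apply (hhom s).1
    show R.map (k ≫ r) = R.map (𝟙 s)
    rw [R.map_comp, hr, R.map_id, Preadditive.comp_neg, hkρ, neg_neg]
  have hmr : m ≫ r = 0 := by
    apply (hhom s).1
    show R.map (m ≫ r) = R.map (0 : s ⟶ s)
    rw [R.map_comp, hr, Preadditive.comp_neg, hmρ, neg_zero, R.map_zero]
  -- k is the kernel of q, hence (k, q) is a short exact sequence
  have hmi' : Mono i' := hses'.mono_f
  have hkmono : Mono k := by
    have : k ≫ q' = i' := hkq'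
    exact mono_of_mono_fac this
  have hkqker : IsLimit (KernelFork.ofι k hkq) := by
    refine KernelFork.IsLimit.ofι' k hkq (fun {T} t ht => ?_)
    have h1 : (t ≫ q') ≫ p' = 0 := by
      rw [Category.assoc, ← hcomm, ← Category.assoc, ht, zero_comp]
    obtain ⟨u, hu₀⟩ := KernelFork.IsLimit.lift' hses'.fIsKernel (t ≫ q') h1
    have hu : u ≫ i' = t ≫ q' := hu₀
    refine ⟨u, ?_⟩
    apply pullback.hom_ext
    · show (u ≫ k) ≫ pullback.fst p p' = t ≫ pullback.fst p p'
      show (u ≫ k) ≫ q = t ≫ q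
      rw [Category.assoc, hkq, comp_zero, ht]
    · show (u ≫ k) ≫ q' = t ≫ q'
      rw [Category.assoc, hkq', hu]
  have hkq0 : k ≫ q = 0 := hkq
  have hepiq : Epi q := by
    rw [hq]
    infer_instance
  have hsesX : (ShortComplex.mk k q hkq0).ShortExact :=
    { exact := (ShortComplex.mk k q hkq0).exact_of_f_is_kernel hkqker,
      mono_f := hkmono, epi_g := hepiq }
  -- q is the cokernel of k
  have hcoker : IsColimit (CokernelCofork.ofπ q hkq0) := hsesX.gIsCokernel
  -- construct the section σ
  have hsplit : k ≫ (𝟙 X - r ≫ k) = 0 := by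
    rw [Preadditive.comp_sub, Category.comp_id, ← Category.assoc, hkr, Category.id_comp,
      sub_self]
  obtain ⟨σ, hσ₀⟩ := CokernelCofork.IsColimit.desc' hcoker (𝟙 X - r ≫ k) hsplit
  have hσ : q ≫ σ = 𝟙 X - r ≫ k := hσ₀
  -- σ ≫ q = 𝟙 E
  have hσq : σ ≫ q = 𝟙 E := by
    have : q ≫ (σ ≫ q) = q ≫ 𝟙 E := by
      rw [← Category.assoc, hσ, Preadditive.sub_comp, Category.id_comp, Category.assoc, hkq,
        comp_zero, sub_zero, Category.comp_id]
    exact (cancel_epi q).1 this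
  refine ⟨σ ≫ q', ?_, ?_⟩
  · -- i ≫ σ ≫ q' = i'
    have hiσ : i ≫ σ = m := by
      have : m ≫ q ≫ σ = m ≫ (𝟙 X - r ≫ k) := by rw [hσ]
      rw [← Category.assoc, hmq] at this
      rw [this, Preadditive.comp_sub, Category.comp_id, ← Category.assoc, hmr, zero_comp,
        sub_zero]
    rw [← Category.assoc, hiσ, hmq']
  · rw [Category.assoc, ← hcomm, ← Category.assoc, hσq, Category.id_comp]
end
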